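/- Fix positive integers r₁,…,r_p. The function F(z₁,…,z_p) = Σ_j (r_j/2) log(1−z_j²) + Σ_{j,k} r_j r_k (1/2) log(1 − z_j z_k + |z_j − z_k|), defined on tuples with 1 > z₁ > ⋯ > z_p > −1, has a critical point (vanishing gradient) exactly when z_l = (Σ_{j>l} r_j − Σ_{j<l} r_j)/(1 + Σ_j r_j) for all l. -/

import Mathlib

open Real

lemma aux_trisum {p : ℕ} (l : Fin p) (c1 c2 : Fin p → ℝ) (c3 : ℝ) :
    ∑ k, (if l < k then c1 k else if k < l then c2 k else c3) =
      (∑ k ∈ Finset.univ.filter (fun k => l < k), c1 k) +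
        (∑ k ∈ Finset.univ.filter (fun k => k < l), c2 k) + c3 := by
  have h : ∀ k : Fin p, (if l < k then c1 k else if k < l then c2 k else c3) =
      (if l < k then c1 k else 0) + (if k < l then c2 k else 0) +
        (if k = l then c3 else 0) := by
    intro k
    rcases lt_trichotomy l k with h | h | h
    · rw [if_pos h, if_pos h, if_neg (lt_asymm h),
        if_neg (by rintro rfl; exact lt_irrefl _ h)]; ring
    · subst h; simp
    · rw [if_neg (lt_asymm h), if_neg (lt_asymm h), if_pos h, if_pos h,
        if_neg (by rintro rfl; exact lt_irrefl _ h)]; ring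
  rw [Finset.sum_congr rfl fun k _ => h k, Finset.sum_add_distrib,
    Finset.sum_add_distrib, ← Finset.sum_filter, ← Finset.sum_filter]
  simp [Finset.sum_ite_eq']

lemma aux_scalar (R a b s zl : ℝ) (hR : 0 < R) (hs : s = a + b + R)
    (h1 : 0 < 1 + zl) (h2 : 0 < 1 - zl) (ha : 0 ≤ a) (hb : 0 ≤ b) :
    ((R/2 + R^2/2 + R*a) * (1+zl)⁻¹ - (R/2 + R^2/2 + R*b) * (1-zl)⁻¹ = 0) ↔
      zl = (a - b)/(1 + s) := by
  have h1' : (1:ℝ) + zl ≠ 0 := ne_of_gt h1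
  have h2' : (1:ℝ) - zl ≠ 0 := ne_of_gt h2
  have hs' : (0:ℝ) < 1 + s := by rw [hs]; linarith
  have key : ((R/2 + R^2/2 + R*a) * (1+zl)⁻¹ - (R/2 + R^2/2 + R*b) * (1-zl)⁻¹ = 0) ↔
      (R/2 + R^2/2 + R*a) * (1 - zl) = (R/2 + R^2/2 + R*b) * (1 + zl) := by
    rw [sub_eq_zero, ← div_eq_mul_inv, ← div_eq_mul_inv, div_eq_div_iff h1' h2']
  rw [key]
  constructor
  · intro h
    have hz : R * ((1 + s) * zl) = R * (a - b) := by
      rw [hs]; linear_combination -h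
    have hz2 : (1 + s) * zl = a - b := mul_left_cancel₀ (ne_of_gt hR) hz
    field_simp
    linarith [hz2]
  · intro h
    rw [h]
    field_simp
    rw [hs]; ring

noncomputable def Gfun (p : ℕ) (r : Fin p → ℕ) (w : Fin p → ℝ) : ℝ :=
  (∑ j, ((r j : ℝ) / 2) * (Real.log (1 + w j) + Real.log (1 - w j))) +
  ∑ j, ∑ k, (r j : ℝ) * (r k : ℝ) * ((1/2 : ℝ) *
    (if j < k then Real.log (1 + w j) + Real.log (1 - w k)
     else if k < j then Real.log (1 - w j) + Real.log (1 + w k)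
     else Real.log (1 + w j) + Real.log (1 - w j)))

noncomputable def Lmap (p : ℕ) (r : Fin p → ℕ) (z : Fin p → ℝ) :
    (Fin p → ℝ) →L[ℝ] ℝ :=
  (∑ j, ((r j : ℝ) / 2) •
      (((1 + z j)⁻¹ • (ContinuousLinearMap.proj j : (Fin p → ℝ) →L[ℝ] ℝ)) +
        -((1 - z j)⁻¹ • (ContinuousLinearMap.proj j : (Fin p → ℝ) →L[ℝ] ℝ)))) +
  ∑ j, ∑ k, ((r j : ℝ) * (r k : ℝ)) • ((1/2 : ℝ) •
    (if j < k then
        ((1 + z j)⁻¹ • (ContinuousLinearMap.proj j : (Fin p → ℝ) →L[ℝ] ℝ)) +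
          -((1 - z k)⁻¹ • (ContinuousLinearMap.proj k : (Fin p → ℝ) →L[ℝ] ℝ))
     else if k < j then
        -((1 - z j)⁻¹ • (ContinuousLinearMap.proj j : (Fin p → ℝ) →L[ℝ] ℝ)) +
          ((1 + z k)⁻¹ • (ContinuousLinearMap.proj k : (Fin p → ℝ) →L[ℝ] ℝ))
     else
        ((1 + z j)⁻¹ • (ContinuousLinearMap.proj j : (Fin p → ℝ) →L[ℝ] ℝ)) +
          -((1 - z j)⁻¹ • (ContinuousLinearMap.proj j : (Fin p → ℝ) →L[ℝ] ℝ))))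

lemma hasFDerivAt_Gfun (p : ℕ) (r : Fin p → ℕ) (z : Fin p → ℝ)
    (hz : ∀ j, z j ∈ Set.Ioo (-1:ℝ) 1) :
    HasFDerivAt (Gfun p r) (Lmap p r z) z := by
  have hz1 : ∀ j, (0:ℝ) < 1 + z j := fun j => by have := (hz j).1; linarith
  have hz2 : ∀ j, (0:ℝ) < 1 - z j := fun j => by have := (hz j).2; linarith
  have hplus : ∀ j : Fin p, HasFDerivAt (fun w : Fin p → ℝ => Real.log (1 + w j))
      ((1 + z j)⁻¹ • (ContinuousLinearMap.proj j : (Fin p → ℝ) →L[ℝ] ℝ)) z := by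
    intro j
    have h1 : HasFDerivAt (fun w : Fin p → ℝ => 1 + w j)
        (ContinuousLinearMap.proj j : (Fin p → ℝ) →L[ℝ] ℝ) z := by
      exact ((ContinuousLinearMap.proj j : (Fin p → ℝ) →L[ℝ] ℝ)).hasFDerivAt.const_add 1
    exact (Real.hasDerivAt_log (ne_of_gt (hz1 j))).comp_hasFDerivAt z h1
  have hminus : ∀ j : Fin p, HasFDerivAt (fun w : Fin p → ℝ => Real.log (1 - w j))
      (-((1 - z j)⁻¹ • (ContinuousLinearMap.proj j : (Fin p → ℝ) →L[ℝ] ℝ))) z := by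
    intro j
    have h1 : HasFDerivAt (fun w : Fin p → ℝ => 1 - w j)
        (-(ContinuousLinearMap.proj j : (Fin p → ℝ) →L[ℝ] ℝ)) z := by
      exact ((ContinuousLinearMap.proj j : (Fin p → ℝ) →L[ℝ] ℝ)).hasFDerivAt.const_sub 1
    have := (Real.hasDerivAt_log (ne_of_gt (hz2 j))).comp_hasFDerivAt z h1
    rw [smul_neg] at this; exact this
  unfold Gfun Lmap
  refine HasFDerivAt.add ?_ ?_
  · refine HasFDerivAt.fun_sum fun j _ => ?_
    exact ((hplus j).add (hminus j)).const_mul _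
  · refine HasFDerivAt.fun_sum fun j _ => ?_
    refine HasFDerivAt.fun_sum fun k _ => ?_
    rcases lt_trichotomy j k with h | h | h
    · simp only [if_pos h]
      exact (((hplus j).add (hminus k)).const_mul _).const_mul _
    · subst h
      simp only [if_neg (lt_irrefl j)]
      exact (((hplus j).add (hminus j)).const_mul _).const_mul _
    · simp only [if_neg (lt_asymm h), if_pos h]
      exact (((hminus j).add (hplus k)).const_mul _).const_mul _

lemma Lmap_single (p : ℕ) (r : Fin p → ℕ) (z : Fin p → ℝ) (l : Fin p) :
    (Lmap p r z) (Pi.single l 1) =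
      ((r l:ℝ)/2 + (r l:ℝ)^2/2 +
          (r l:ℝ) * (∑ j ∈ Finset.univ.filter (fun j => l < j), (r j:ℝ))) * (1 + z l)⁻¹
      - ((r l:ℝ)/2 + (r l:ℝ)^2/2 +
          (r l:ℝ) * (∑ j ∈ Finset.univ.filter (fun j => j < l), (r j:ℝ))) * (1 - z l)⁻¹ := by
  classical
  set α := (1 + z l)⁻¹ with hα
  set β := (1 - z l)⁻¹ with hβ
  set a := ∑ j ∈ Finset.univ.filter (fun j => l < j), (r j:ℝ) with ha
  set b := ∑ j ∈ Finset.univ.filter (fun j => j < l), (r j:ℝ) with hb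
  have hδ : ∀ j : Fin p, (Pi.single l (1:ℝ) : Fin p → ℝ) j = if j = l then (1:ℝ) else 0 := by
    intro j; rw [Pi.single_apply]
  rw [Lmap]
  simp only [ContinuousLinearMap.add_apply, ContinuousLinearMap.sum_apply,
    ContinuousLinearMap.coe_smul', Pi.smul_apply, ContinuousLinearMap.neg_apply,
    ContinuousLinearMap.smul_apply,
    apply_ite (fun (f : (Fin p → ℝ) →L[ℝ] ℝ) => f (Pi.single l 1)),
    ContinuousLinearMap.proj_apply, smul_eq_mul, hδ]
  -- first sum
  have hS1 : (∑ j, ((r j : ℝ)/2) * ((1 + z j)⁻¹ * (if j = l then (1:ℝ) else 0) +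
      -((1 - z j)⁻¹ * (if j = l then (1:ℝ) else 0)))) = (r l : ℝ)/2 * (α - β) := by
    have h : ∀ j : Fin p, ((r j : ℝ)/2) * ((1 + z j)⁻¹ * (if j = l then (1:ℝ) else 0) +
        -((1 - z j)⁻¹ * (if j = l then (1:ℝ) else 0))) =
        if j = l then (r l : ℝ)/2 * (α - β) else 0 := by
      intro j
      by_cases hj : j = l
      · subst hj; simp only [eq_self_iff_true, if_true, mul_one]; ring
      · simp [hj]
    rw [Finset.sum_congr rfl fun j _ => h j]
    simp [Finset.sum_ite_eq']
  have hpoint : ∀ j k : Fin p,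
      (r j:ℝ) * (r k:ℝ) *
        (1/2 * if j < k then ((1 + z j)⁻¹ * if j = l then (1:ℝ) else 0) +
              -((1 - z k)⁻¹ * if k = l then (1:ℝ) else 0)
          else if k < j then -((1 - z j)⁻¹ * if j = l then (1:ℝ) else 0) +
              (1 + z k)⁻¹ * if k = l then (1:ℝ) else 0
          else ((1 + z j)⁻¹ * if j = l then (1:ℝ) else 0) +
              -((1 - z j)⁻¹ * if j = l then (1:ℝ) else 0)) =
      ((r j:ℝ) * (r k:ℝ) * (1/2) *
          (if j < k then (1 + z j)⁻¹ else if k < j then -(1 - z j)⁻¹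
            else (1 + z j)⁻¹ - (1 - z j)⁻¹)) * (if j = l then (1:ℝ) else 0) +
      ((r j:ℝ) * (r k:ℝ) * (1/2) *
          (if j < k then -(1 - z k)⁻¹ else if k < j then (1 + z k)⁻¹ else 0)) *
        (if k = l then (1:ℝ) else 0) := by
    intro j k
    rcases lt_trichotomy j k with h | h | h
    · simp only [if_pos h]; ring
    · subst h; simp only [if_neg (lt_irrefl j)]; ring
    · simp only [if_neg (lt_asymm h), if_pos h]; ring
  have e1 : ∀ j : Fin p,
      (∑ k, (((r j:ℝ) * (r k:ℝ) * (1/2) *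
          (if j < k then (1 + z j)⁻¹ else if k < j then -(1 - z j)⁻¹
            else (1 + z j)⁻¹ - (1 - z j)⁻¹)) * (if j = l then (1:ℝ) else 0) +
        ((r j:ℝ) * (r k:ℝ) * (1/2) *
          (if j < k then -(1 - z k)⁻¹ else if k < j then (1 + z k)⁻¹ else 0)) *
          (if k = l then (1:ℝ) else 0))) =
      (if j = l then (∑ k, (r j:ℝ) * (r k:ℝ) * (1/2) *
          (if j < k then (1 + z j)⁻¹ else if k < j then -(1 - z j)⁻¹
            else (1 + z j)⁻¹ - (1 - z j)⁻¹)) else 0) +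
      (r j:ℝ) * (r l:ℝ) * (1/2) *
          (if j < l then -(1 - z l)⁻¹ else if l < j then (1 + z l)⁻¹ else 0) := by
    intro j
    rw [Finset.sum_add_distrib]
    congr 1
    · rw [← Finset.sum_mul]
      by_cases hj : j = l <;> simp [hj]
    · simp [mul_ite, mul_one, mul_zero, Finset.sum_ite_eq']
  have hg : (∑ k, (r l:ℝ) * (r k:ℝ) * (1/2) *
      (if l < k then (1 + z l)⁻¹ else if k < l then -(1 - z l)⁻¹
        else (1 + z l)⁻¹ - (1 - z l)⁻¹)) =
      (r l:ℝ) * (1/2) * α * a - (r l:ℝ) * (1/2) * β * b + (r l:ℝ)^2 * (1/2) * (α - β) := by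
    have hpt : ∀ k : Fin p, (r l:ℝ) * (r k:ℝ) * (1/2) *
        (if l < k then (1 + z l)⁻¹ else if k < l then -(1 - z l)⁻¹
          else (1 + z l)⁻¹ - (1 - z l)⁻¹) =
        (if l < k then ((r l:ℝ) * (1/2) * α) * (r k:ℝ)
          else if k < l then (-((r l:ℝ) * (1/2) * β)) * (r k:ℝ)
          else (r l:ℝ)^2 * (1/2) * (α - β)) := by
      intro k
      rcases lt_trichotomy l k with h | h | h
      · rw [if_pos h, if_pos h]; rw [hα]; ring
      · subst h; rw [if_neg (lt_irrefl l), if_neg (lt_irrefl l), if_neg (lt_irrefl l),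
          if_neg (lt_irrefl l)]; rw [hα, hβ]; ring
      · rw [if_neg (lt_asymm h), if_pos h, if_neg (lt_asymm h), if_pos h]; rw [hβ]; ring
    rw [Finset.sum_congr rfl fun k _ => hpt k, aux_trisum l _ _ _,
      ← Finset.mul_sum, ← Finset.mul_sum, ← ha, ← hb]
    ring
  have hh : (∑ j, (r j:ℝ) * (r l:ℝ) * (1/2) *
      (if j < l then -(1 - z l)⁻¹ else if l < j then (1 + z l)⁻¹ else 0)) =
      (r l:ℝ) * (1/2) * α * a - (r l:ℝ) * (1/2) * β * b := by
    have hpt : ∀ j : Fin p, (r j:ℝ) * (r l:ℝ) * (1/2) *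
        (if j < l then -(1 - z l)⁻¹ else if l < j then (1 + z l)⁻¹ else 0) =
        (if l < j then ((r l:ℝ) * (1/2) * α) * (r j:ℝ)
          else if j < l then (-((r l:ℝ) * (1/2) * β)) * (r j:ℝ)
          else 0) := by
      intro j
      rcases lt_trichotomy l j with h | h | h
      · rw [if_neg (lt_asymm h), if_pos h, if_pos h]; rw [hα]; ring
      · subst h; simp [lt_irrefl]
      · rw [if_pos h, if_neg (lt_asymm h), if_pos h]; rw [hβ]; ring
    rw [Finset.sum_congr rfl fun j _ => hpt j, aux_trisum l _ _ _,
      ← Finset.mul_sum, ← Finset.mul_sum, ← ha, ← hb]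
    ring
  rw [hS1]
  rw [Finset.sum_congr rfl fun j (_ : j ∈ Finset.univ) =>
    (Finset.sum_congr rfl fun k (_ : k ∈ Finset.univ) => hpoint j k)]
  rw [Finset.sum_congr rfl fun j (_ : j ∈ Finset.univ) => e1 j]
  rw [Finset.sum_add_distrib]
  rw [Finset.sum_ite_eq' Finset.univ l]
  rw [if_pos (Finset.mem_univ l)]
  rw [hg, hh]
  ring

theorem stmt8 (p : ℕ) (hp : 1 ≤ p) (r : Fin p → ℕ) (hr : ∀ j, 0 < r j)
    (F : (Fin p → ℝ) → ℝ)
    (hF : ∀ z : Fin p → ℝ, F z =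
      ∑ j, ((r j : ℝ) / 2) * Real.log (1 - z j ^ 2) +
      ∑ j, ∑ k, (r j : ℝ) * (r k : ℝ) * ((1 / 2) *
        Real.log (1 - z j * z k + |z j - z k|)))
    (z : Fin p → ℝ) (hz : ∀ j, z j ∈ Set.Ioo (-1:ℝ) 1)
    (hmono : ∀ j k : Fin p, j < k → z k < z j) :
    fderiv ℝ F z = 0 ↔
      ∀ l : Fin p, z l =
        ((∑ j ∈ Finset.univ.filter (fun j => l < j), (r j : ℝ)) -
          ∑ j ∈ Finset.univ.filter (fun j => j < l), (r j : ℝ)) /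
        (1 + ∑ j, (r j : ℝ)) := by
  classical
  have hz1 : ∀ j, (0:ℝ) < 1 + z j := fun j => by have := (hz j).1; linarith
  have hz2 : ∀ j, (0:ℝ) < 1 - z j := fun j => by have := (hz j).2; linarith
  set U : Set (Fin p → ℝ) :=
    (⋂ j, {w : Fin p → ℝ | w j ∈ Set.Ioo (-1:ℝ) 1}) ∩
      ⋂ j, ⋂ k, {w : Fin p → ℝ | j < k → w k < w j} with hUdef
  have hUopen : IsOpen U := by
    apply IsOpen.inter
    · exact isOpen_iInter_of_finite fun j =>
        IsOpen.preimage (continuous_apply j) isOpen_Ioo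
    · refine isOpen_iInter_of_finite fun j => isOpen_iInter_of_finite fun k => ?_
      by_cases h : j < k
      · have he : {w : Fin p → ℝ | j < k → w k < w j} = {w : Fin p → ℝ | w k < w j} := by
          ext w; simp [h]
        rw [he]; exact isOpen_lt (continuous_apply k) (continuous_apply j)
      · have he : {w : Fin p → ℝ | j < k → w k < w j} = Set.univ := by
          ext w; simp [h]
        rw [he]; exact isOpen_univ
  have hzU : z ∈ U := ⟨Set.mem_iInter.2 fun j => hz j,
    Set.mem_iInter.2 fun j => Set.mem_iInter.2 fun k => fun h => hmono j k h⟩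
  have hFG : ∀ w ∈ U, F w = Gfun p r w := by
    intro w hw
    obtain ⟨hw1, hw2⟩ := hw
    rw [Set.mem_iInter] at hw1
    have hw1' : ∀ j, -1 < w j ∧ w j < 1 := fun j => hw1 j
    have hmw : ∀ j k : Fin p, j < k → w k < w j := by
      intro j k h
      exact (Set.mem_iInter.1 (Set.mem_iInter.1 hw2 j) k) h
    have p1 : ∀ j, (0:ℝ) < 1 + w j := fun j => by have := (hw1' j).1; linarith
    have p2 : ∀ j, (0:ℝ) < 1 - w j := fun j => by have := (hw1' j).2; linarith
    rw [hF w, Gfun]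
    congr 1
    · refine Finset.sum_congr rfl fun j _ => ?_
      have he : 1 - w j ^ 2 = (1 + w j) * (1 - w j) := by ring
      rw [he, Real.log_mul (ne_of_gt (p1 j)) (ne_of_gt (p2 j))]
    · refine Finset.sum_congr rfl fun j _ => Finset.sum_congr rfl fun k _ => ?_
      rcases lt_trichotomy j k with h | h | h
      · rw [if_pos h]
        have hlt := hmw j k h
        have habs : |w j - w k| = w j - w k := abs_of_pos (by linarith)
        have he : 1 - w j * w k + |w j - w k| = (1 + w j) * (1 - w k) := by
          rw [habs]; ring
        rw [he, Real.log_mul (ne_of_gt (p1 j)) (ne_of_gt (p2 k))]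
      · subst h
        rw [if_neg (lt_irrefl j), if_neg (lt_irrefl j)]
        have he : 1 - w j * w j + |w j - w j| = (1 + w j) * (1 - w j) := by
          rw [sub_self, abs_zero]; ring
        rw [he, Real.log_mul (ne_of_gt (p1 j)) (ne_of_gt (p2 j))]
      · rw [if_neg (lt_asymm h), if_pos h]
        have hlt := hmw k j h
        have habs : |w j - w k| = -(w j - w k) := abs_of_neg (by linarith)
        have he : 1 - w j * w k + |w j - w k| = (1 - w j) * (1 + w k) := by
          rw [habs]; ring
        rw [he, Real.log_mul (ne_of_gt (p2 j)) (ne_of_gt (p1 k))]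
  have hev : F =ᶠ[nhds z] Gfun p r :=
    Filter.eventuallyEq_of_mem (hUopen.mem_nhds hzU) hFG
  have hfd : fderiv ℝ F z = Lmap p r z := by
    rw [hev.fderiv_eq, (hasFDerivAt_Gfun p r z hz).fderiv]
  rw [hfd]
  have hzero : Lmap p r z = 0 ↔ ∀ l : Fin p, (Lmap p r z) (Pi.single l 1) = 0 := by
    constructor
    · intro h l; rw [h]; simp
    · intro h
      ext x
      have hx : x = ∑ l, x l • (Pi.single l (1:ℝ) : Fin p → ℝ) := by
        have hs : ∀ l : Fin p, x l • (Pi.single l (1:ℝ) : Fin p → ℝ) = Pi.single l (x l) := by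
          intro l; ext m; by_cases hm : m = l <;> simp [Pi.single_apply, hm]
        rw [Finset.sum_congr rfl fun l _ => hs l, Finset.univ_sum_single]
      conv_lhs => rw [hx]
      rw [map_sum]
      simp only [map_smul, smul_eq_mul]
      simp [h]
  rw [hzero]
  refine forall_congr' fun l => ?_
  rw [Lmap_single p r z l]
  have hR : (0:ℝ) < (r l : ℝ) := by exact_mod_cast hr l
  have hs : (∑ j, (r j:ℝ)) = (∑ j ∈ Finset.univ.filter (fun j => l < j), (r j:ℝ)) +
      (∑ j ∈ Finset.univ.filter (fun j => j < l), (r j:ℝ)) + (r l:ℝ) := by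
    have hpt : ∀ j : Fin p, (r j:ℝ) =
        if l < j then (r j:ℝ) else if j < l then (r j:ℝ) else (r l:ℝ) := by
      intro j
      rcases lt_trichotomy l j with h | h | h
      · rw [if_pos h]
      · subst h; simp [lt_irrefl]
      · rw [if_neg (lt_asymm h), if_pos h]
    rw [Finset.sum_congr rfl fun j _ => hpt j, aux_trisum]
  have ha0 : (0:ℝ) ≤ ∑ j ∈ Finset.univ.filter (fun j => l < j), (r j:ℝ) :=
    Finset.sum_nonneg fun j _ => by positivity
  have hb0 : (0:ℝ) ≤ ∑ j ∈ Finset.univ.filter (fun j => j < l), (r j:ℝ) :=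
    Finset.sum_nonneg fun j _ => by positivity
  exact aux_scalar ((r l:ℝ)) _ _ _ (z l) hR hs (hz1 l) (hz2 l) ha0 hb0
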